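/- (Proposition 3.2.3, part 2.) Assume the MPEC setup with F and g continuously differentiable, let z̄ ∈ 𝓕 with M(z̄) nonempty, and let dx ∈ ℝ^n. Let λ ∈ M(z̄) be any optimal solution of the linear program: maximize Σ_{i=1}^{ℓ} λ'_i ⟨∇_x g_i(z̄), dx⟩ over λ' ∈ M(z̄). Then K(z̄, λ; dx) equals the set of optimal solutions of the linear program: minimize ⟨dy, F(z̄)⟩ over dy ∈ ℝ^m subject to ⟨∇_x g_i(z̄), dx⟩ + ⟨∇_y g_i(z̄), dy⟩ ≤ 0 for all i ∈ 𝓘(z̄). In particular, K(z̄, λ; dx) is the same set for every such optimal λ. -/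

import Mathlib

open Filter Topology BigOperators

noncomputable section

/-- Vectors in `ℝ^n`. -/
abbrev Vec (n : ℕ) := Fin n → ℝ

/-- Euclidean inner product on `ℝ^n`. -/
def dotp {n : ℕ} (a b : Vec n) : ℝ := ∑ i, a i * b i

/-- The tangent cone to `S` at `z`: all `d` such that there exist points `zs k ∈ S`
with `zs k → z` and scalars `ts k ↓ 0` with `(zs k - z) / ts k → d`. -/
def tangentCone {E : Type*} [NormedAddCommGroup E] [NormedSpace ℝ E]
    (S : Set E) (z : E) : Set E :=
  {d | ∃ (zs : ℕ → E) (ts : ℕ → ℝ),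
    (∀ k, zs k ∈ S) ∧ Tendsto zs atTop (𝓝 z) ∧
    (∀ k, 0 < ts k) ∧ Tendsto ts atTop (𝓝 0) ∧
    Tendsto (fun k => (ts k)⁻¹ • (zs k - z)) atTop (𝓝 d)}

variable {n m l : ℕ}

/-- Lower-level feasible set `C(x) = {y : g(x,y) ≤ 0}`. -/
def lowerC (g : Vec n × Vec m → Vec l) (x : Vec n) : Set (Vec m) :=
  {y | ∀ i, g (x, y) i ≤ 0}

/-- Lower-level VI solution set `S(x) = SOL(F(x,·), C(x))`. -/
def lowerS (F : Vec n × Vec m → Vec m) (g : Vec n × Vec m → Vec l)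
    (x : Vec n) : Set (Vec m) :=
  {y | y ∈ lowerC g x ∧ ∀ v ∈ lowerC g x, 0 ≤ dotp (F (x, y)) (v - y)}

/-- The MPEC feasible set `𝓕 = {(x,y) ∈ Z : y ∈ S(x)}`. -/
def feasSet (F : Vec n × Vec m → Vec m) (g : Vec n × Vec m → Vec l)
    (Z : Set (Vec n × Vec m)) : Set (Vec n × Vec m) :=
  {z | z ∈ Z ∧ z.2 ∈ lowerS F g z.1}

/-- `j`-th component of the gradient `∇_y g_i(z)`. -/
def gradYg (g : Vec n × Vec m → Vec l) (i : Fin l) (z : Vec n × Vec m) : Vec m :=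
  fun j => fderiv ℝ (fun p => g p i) z (0, Pi.single j 1)

/-- `⟨∇_x g_i(z̄), dx⟩`, expressed via the Fréchet derivative in the `x`-slot. -/
def dgX (g : Vec n × Vec m → Vec l) (i : Fin l) (z : Vec n × Vec m) (dx : Vec n) : ℝ :=
  fderiv ℝ (fun p => g p i) z (dx, 0)

/-- `⟨∇_y g_i(z̄), dy⟩`, expressed via the Fréchet derivative in the `y`-slot. -/
def dgY (g : Vec n × Vec m → Vec l) (i : Fin l) (z : Vec n × Vec m) (dy : Vec m) : ℝ :=
  fderiv ℝ (fun p => g p i) z (0, dy)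

/-- Multiplier set `M(z)` of the lower-level VI. -/
def multSet (F : Vec n × Vec m → Vec m) (g : Vec n × Vec m → Vec l)
    (z : Vec n × Vec m) : Set (Vec l) :=
  {lam | (∀ i, 0 ≤ lam i) ∧
    (∀ j, F z j + ∑ i, lam i * gradYg g i z j = 0) ∧
    (∑ i, lam i * g z i = 0)}

/-- VI Lagrangian `L(z, λ) = F(z) + Σ_i λ_i ∇_y g_i(z)`. -/
def viLag (F : Vec n × Vec m → Vec m) (g : Vec n × Vec m → Vec l)
    (z : Vec n × Vec m) (lam : Vec l) : Vec m :=
  fun j => F z j + ∑ i, lam i * gradYg g i z j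

/-- Lifted critical cone `K(z̄, λ)`. -/
def liftedCone (g : Vec n × Vec m → Vec l) (zbar : Vec n × Vec m) (lam : Vec l) :
    Set (Vec n × Vec m) :=
  {d | ∀ i, g zbar i = 0 →
      (lam i = 0 → dgX g i zbar d.1 + dgY g i zbar d.2 ≤ 0) ∧
      (0 < lam i → dgX g i zbar d.1 + dgY g i zbar d.2 = 0)}

/-- Directional critical set `K(z̄, λ; dx)`. -/
def dirCrit (g : Vec n × Vec m → Vec l) (zbar : Vec n × Vec m) (lam : Vec l)
    (dx : Vec n) : Set (Vec m) :=
  {dy | (dx, dy) ∈ liftedCone g zbar lam}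

/-- `∇_x L(z̄, λ) dx`, the partial Jacobian of the VI Lagrangian in `x` applied to `dx`. -/
def jacLx (F : Vec n × Vec m → Vec m) (g : Vec n × Vec m → Vec l)
    (zbar : Vec n × Vec m) (lam : Vec l) (dx : Vec n) : Vec m :=
  fun j => fderiv ℝ (fun z => viLag F g z lam j) zbar (dx, 0)

/-- `∇_y L(z̄, λ) dy`, the partial Jacobian of the VI Lagrangian in `y` applied to `dy`. -/
def jacLy (F : Vec n × Vec m → Vec m) (g : Vec n × Vec m → Vec l)
    (zbar : Vec n × Vec m) (lam : Vec l) (dy : Vec m) : Vec m :=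
  fun j => fderiv ℝ (fun z => viLag F g z lam j) zbar (0, dy)

/-- `dy` solves `AVI(∇_x L(z̄,λ) dx, ∇_y L(z̄,λ), K(z̄,λ;dx))`. -/
def solvesAVI (F : Vec n × Vec m → Vec m) (g : Vec n × Vec m → Vec l)
    (zbar : Vec n × Vec m) (lam : Vec l) (dx : Vec n) (dy : Vec m) : Prop :=
  dy ∈ dirCrit g zbar lam dx ∧
  ∀ v ∈ dirCrit g zbar lam dx,
    0 ≤ dotp (jacLx F g zbar lam dx + jacLy F g zbar lam dy) (v - dy)

/-- SBCQ at `zbar`: every feasible sequence converging to `zbar` admits a bounded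
sequence of multipliers. -/
def SBCQ (F : Vec n × Vec m → Vec m) (g : Vec n × Vec m → Vec l)
    (Z : Set (Vec n × Vec m)) (zbar : Vec n × Vec m) : Prop :=
  ∀ zs : ℕ → Vec n × Vec m, (∀ k, zs k ∈ feasSet F g Z) → Tendsto zs atTop (𝓝 zbar) →
    ∃ lams : ℕ → Vec l, (∀ k, lams k ∈ multSet F g (zs k)) ∧ ∃ C : ℝ, ∀ k, ‖lams k‖ ≤ C

open scoped RealInnerProductSpace

section Farkas

variable {E : Type*} [NormedAddCommGroup E] [InnerProductSpace ℝ E] [FiniteDimensional ℝ E]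
variable {ι : Type*} [DecidableEq ι]

/-- The conic hull of the vectors `v i`, `i ∈ s`. -/
def coneOf (s : Finset ι) (v : ι → E) : Set E :=
  {x | ∃ μ : ι → ℝ, (∀ i ∈ s, 0 ≤ μ i) ∧ x = ∑ i ∈ s, μ i • v i}

lemma isClosed_coneOf (s : Finset ι) (v : ι → E) : IsClosed (coneOf s v) := by
  induction s using Finset.strongInductionOn with
  | _ s ih =>
  by_cases hli : LinearIndependent ℝ (fun i : ↥s => v i)
  · -- linearly independent generators: the cone is the image of a closed set under a
    -- closed embedding
    let f : (↥s → ℝ) →ₗ[ℝ] E :=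
      { toFun := fun μ => ∑ i : ↥s, μ i • v i
        map_add' := fun a b => by simp [add_smul, Finset.sum_add_distrib]
        map_smul' := fun c a => by simp [smul_smul, Finset.smul_sum] }
    have hker : LinearMap.ker f = ⊥ := by
      rw [LinearMap.ker_eq_bot']
      intro μ hμ
      funext i
      exact Fintype.linearIndependent_iff.mp hli μ hμ i
    have himg : coneOf s v = f '' {μ : ↥s → ℝ | ∀ i, 0 ≤ μ i} := by
      ext x
      constructor
      · rintro ⟨μ, hμ, rfl⟩
        refine ⟨fun i => μ i, fun i => hμ i i.2, ?_⟩
        show (∑ i : ↥s, μ i • v i) = _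
        rw [Finset.sum_coe_sort s (fun i => μ i • v i)]
      · rintro ⟨ν, hν, rfl⟩
        refine ⟨fun i => if h : i ∈ s then ν ⟨i, h⟩ else 0, fun i hi => by
          simp only [dif_pos hi]; exact hν _, ?_⟩
        show _ = ∑ i ∈ s, (if h : i ∈ s then ν ⟨i, h⟩ else 0) • v i
        rw [← Finset.sum_coe_sort s (fun i => (if h : i ∈ s then ν ⟨i, h⟩ else 0) • v i)]
        show (∑ i : ↥s, ν i • v i) = _
        exact Finset.sum_congr rfl fun i _ => by rw [dif_pos i.2]
    rw [himg]
    have hclosed : IsClosed {μ : ↥s → ℝ | ∀ i, 0 ≤ μ i} := by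
      have : {μ : ↥s → ℝ | ∀ i, 0 ≤ μ i} = ⋂ i, {μ : ↥s → ℝ | 0 ≤ μ i} := by
        ext μ; simp
      rw [this]
      exact isClosed_iInter fun i => isClosed_le continuous_const (continuous_apply i)
    exact (LinearMap.isClosedEmbedding_of_injective hker).isClosedMap _ hclosed
  · -- linearly dependent generators: the cone is a finite union of cones with fewer
    -- generators
    obtain ⟨gc, hgsum, i₁, hgi₁⟩ := Fintype.not_linearIndependent_iff.mp hli
    obtain ⟨cc, hcsum, j₁, hj₁⟩ : ∃ cc : ↥s → ℝ, ∑ i, cc i • v i = 0 ∧ ∃ j, 0 < cc j := by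
      rcases lt_or_gt_of_ne hgi₁ with h | h
      · exact ⟨-gc, by simpa using hgsum, i₁, by simpa using h⟩
      · exact ⟨gc, hgsum, i₁, h⟩
    set C : ι → ℝ := fun i => if h : i ∈ s then cc ⟨i, h⟩ else 0 with hC
    have hCsum : ∑ i ∈ s, C i • v i = 0 := by
      rw [← Finset.sum_coe_sort s (fun i => C i • v i), ← hcsum]
      exact Finset.sum_congr rfl fun i _ => by simp [hC, i.2]
    set P : Finset ι := s.filter (fun i => 0 < C i) with hP
    have hPne : P.Nonempty := ⟨j₁, by simp [hP, hC, j₁.2, hj₁]⟩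
    have hunion : coneOf s v = ⋃ i ∈ P, coneOf (s.erase i) v := by
      ext x
      constructor
      · rintro ⟨μ, hμ, rfl⟩
        obtain ⟨i₀, hi₀P, hti₀⟩ := Finset.exists_mem_eq_inf' hPne (fun i => μ i / C i)
        set t : ℝ := P.inf' hPne (fun i => μ i / C i) with ht

        have hi₀s : i₀ ∈ s := (Finset.mem_filter.mp hi₀P).1
        have hCi₀ : 0 < C i₀ := (Finset.mem_filter.mp hi₀P).2
        have htnn : 0 ≤ t := by
          rw [ht]
          apply Finset.le_inf'
          intro b hb
          exact div_nonneg (hμ b (Finset.mem_filter.mp hb).1) (le_of_lt (Finset.mem_filter.mp hb).2)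
        set μ' : ι → ℝ := fun j => μ j - t * C j with hμ'
        have hμ'nn : ∀ j ∈ s, 0 ≤ μ' j := by
          intro j hj
          by_cases hCj : 0 < C j
          · have hjP : j ∈ P := Finset.mem_filter.mpr ⟨hj, hCj⟩
            have h1 : t ≤ μ j / C j := by
              rw [ht]; exact Finset.inf'_le (fun i => μ i / C i) hjP
            have := (le_div_iff₀ hCj).mp h1
            simp only [hμ']
            linarith
          · push_neg at hCj
            have : t * C j ≤ 0 := mul_nonpos_of_nonneg_of_nonpos htnn hCj
            simp only [hμ']
            have := hμ j hj
            linarith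
        have hμ'i₀ : μ' i₀ = 0 := by
          simp only [hμ', hti₀]
          field_simp
          ring
        have hsum' : ∑ j ∈ s, μ' j • v j = ∑ j ∈ s, μ j • v j := by
          simp only [hμ', sub_smul, mul_smul]
          rw [Finset.sum_sub_distrib, ← Finset.smul_sum, hCsum, smul_zero, sub_zero]
        refine Set.mem_biUnion hi₀P ⟨μ', fun j hj => hμ'nn j (Finset.mem_of_mem_erase hj), ?_⟩
        rw [← Finset.add_sum_erase s (fun j => μ' j • v j) hi₀s] at hsum'
        rw [hμ'i₀, zero_smul, zero_add] at hsum'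
        rw [hsum']
      · intro hx
        obtain ⟨i, hiP, hxi⟩ := Set.mem_iUnion₂.mp hx
        obtain ⟨μ, hμ, rfl⟩ := hxi
        refine ⟨fun j => if j ∈ s.erase i then μ j else 0, fun j hj => ?_, ?_⟩
        · by_cases h : j ∈ s.erase i <;> simp [h, hμ j]
        · rw [← Finset.sum_subset (Finset.erase_subset i s)
            (fun x _ hx' => by simp [hx'])]
          exact Finset.sum_congr rfl fun j hj => by simp [hj]
    rw [hunion]
    exact Set.Finite.isClosed_biUnion P.finite_toSet
      (fun i hi => ih _ (Finset.erase_ssubset (Finset.mem_filter.mp hi).1))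

end Farkas
section FarkasLemma
variable {E : Type*} [NormedAddCommGroup E] [InnerProductSpace ℝ E] [FiniteDimensional ℝ E]
variable {ι : Type*} [DecidableEq ι]

lemma farkas (s : Finset ι) (v : ι → E) (c : E)
    (h : ∀ d : E, (∀ i ∈ s, ⟪v i, d⟫ ≤ 0) → ⟪c, d⟫ ≤ 0) :
    c ∈ coneOf s v := by
  by_contra hc
  let K : ConvexCone ℝ E :=
    { carrier := coneOf s v
      smul_mem' := by
        rintro r hr x ⟨μ, hμ, rfl⟩
        exact ⟨fun i => r * μ i, fun i hi => mul_nonneg hr.le (hμ i hi), by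
          rw [Finset.smul_sum]; exact Finset.sum_congr rfl fun i _ => (mul_smul r (μ i) (v i)).symm⟩
      add_mem' := by
        rintro x ⟨μ, hμ, rfl⟩ y ⟨ν, hν, rfl⟩
        exact ⟨fun i => μ i + ν i, fun i hi => add_nonneg (hμ i hi) (hν i hi), by
          rw [← Finset.sum_add_distrib]
          exact Finset.sum_congr rfl fun i _ => (add_smul (μ i) (ν i) (v i)).symm⟩ }
  have hne : (K : Set E).Nonempty := ⟨0, ⟨0, by simp, by simp⟩⟩
  have hcl : IsClosed (K : Set E) := isClosed_coneOf s v
  let PC : ProperCone ℝ E := ⟨K.toPointedCone (show (0:E) ∈ K from ⟨0, by simp, by simp⟩), hcl⟩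
  obtain ⟨y, hy1, hy2'⟩ := PC.hyperplane_separation' (x₀ := c) hc
  have hy2 : ⟪y, c⟫ < 0 := by rw [real_inner_comm]; exact hy2'
  have hvy : ∀ i ∈ s, ⟪v i, -y⟫ ≤ 0 := by
    intro i hi
    have hmem : v i ∈ K := by
      refine ⟨fun j => if j = i then 1 else 0, fun j _ => by positivity, ?_⟩
      have : ∀ j ∈ s, (fun j => if j = i then (1:ℝ) else 0) j • v j
          = if j = i then v j else 0 := fun j _ => by split <;> simp [*]
      rw [Finset.sum_congr rfl this, Finset.sum_ite_eq' s i v, if_pos hi]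
    have := hy1 _ hmem
    rw [inner_neg_right]
    linarith
  have := h (-y) hvy
  rw [inner_neg_right] at this
  rw [real_inner_comm] at hy2
  linarith

end FarkasLemma
section Helpers

open scoped RealInnerProductSpace

lemma dotp_comm {k : ℕ} (a b : Vec k) : dotp a b = dotp b a := by
  simp [dotp, mul_comm]

lemma dotp_add_left {k : ℕ} (a b c : Vec k) : dotp (a + b) c = dotp a c + dotp b c := by
  simp [dotp, add_mul, Finset.sum_add_distrib]

lemma dotp_smul_left {k : ℕ} (r : ℝ) (a b : Vec k) : dotp (r • a) b = r * dotp a b := by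
  simp [dotp, Finset.mul_sum, mul_assoc]

lemma dotp_zero_left {k : ℕ} (b : Vec k) : dotp (0 : Vec k) b = 0 := by simp [dotp]

/-- The derivative in the `y`-slot is the dot product against the gradient. -/
lemma dgY_eq {n m l : ℕ} (g : Vec n × Vec m → Vec l) (i : Fin l) (z : Vec n × Vec m)
    (dy : Vec m) : dgY g i z dy = ∑ j, dy j * gradYg g i z j := by
  have h : ((0 : Vec n), dy) = ∑ j, dy j • ((0 : Vec n), (Pi.single j 1 : Vec m)) := by
    rw [Prod.ext_iff]
    constructor
    · rw [Prod.fst_sum]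
      simp
    · rw [Prod.snd_sum]
      funext k
      rw [Finset.sum_apply]
      simp [Pi.single_apply]
  show fderiv ℝ (fun p => g p i) z ((0 : Vec n), dy) = _
  rw [h, map_sum]
  exact Finset.sum_congr rfl fun j _ => by
    rw [ContinuousLinearMap.map_smul, smul_eq_mul]; rfl

lemma dgY_add {n m l : ℕ} (g : Vec n × Vec m → Vec l) (i : Fin l) (z : Vec n × Vec m)
    (u v : Vec m) : dgY g i z (u + v) = dgY g i z u + dgY g i z v := by
  simp [dgY_eq, add_mul, Finset.sum_add_distrib]

lemma dgY_smul {n m l : ℕ} (g : Vec n × Vec m → Vec l) (i : Fin l) (z : Vec n × Vec m)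
    (r : ℝ) (u : Vec m) : dgY g i z (r • u) = r * dgY g i z u := by
  simp [dgY_eq, Finset.mul_sum, mul_assoc]

lemma dgY_dotp {n m l : ℕ} (g : Vec n × Vec m → Vec l) (i : Fin l) (z : Vec n × Vec m)
    (u : Vec m) : dgY g i z u = dotp (gradYg g i z) u := by
  rw [dgY_eq, dotp_comm]; rfl

/-- Auxiliary Euclidean space used for the Farkas argument. -/
abbrev ESp (m : ℕ) := EuclideanSpace ℝ (Fin m ⊕ Unit)

/-- Embedding of a vector together with an extra scalar slot. -/
def emb {m : ℕ} (w : Vec m) (r : ℝ) : ESp m := WithLp.toLp 2 (Sum.elim w (fun _ => r))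

lemma inner_emb {m : ℕ} (w d : Vec m) (r t : ℝ) :
    ⟪(emb w r : ESp m), emb d t⟫ = dotp w d + r * t := by
  simp [emb, dotp, PiLp.inner_apply, RCLike.inner_apply, Fintype.sum_sum_type, mul_comm]

lemma esp_sum_apply {κ : Type*} [Fintype κ] {ι : Type*} (s : Finset ι)
    (f : ι → EuclideanSpace ℝ κ) (k : κ) :
    (∑ i ∈ s, f i) k = ∑ i ∈ s, f i k := by
  induction s using Finset.cons_induction with
  | empty => rfl
  | cons i s hi ih => rw [Finset.sum_cons, Finset.sum_cons, PiLp.add_apply, ih]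

end Helpers

/-- The generators used in the Farkas argument: one per constraint, plus a slack generator. -/
def fkV {n m l : ℕ} (g : Vec n × Vec m → Vec l) (zbar : Vec n × Vec m) (dx : Vec n) :
    Option (Fin l) → ESp m
  | none => emb 0 1
  | some i => emb (gradYg g i zbar) (-(dgX g i zbar dx))

@[simp] lemma fkV_none {n m l : ℕ} (g : Vec n × Vec m → Vec l) (zbar : Vec n × Vec m)
    (dx : Vec n) : fkV g zbar dx none = emb 0 1 := rfl

@[simp] lemma fkV_some {n m l : ℕ} (g : Vec n × Vec m → Vec l) (zbar : Vec n × Vec m)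
    (dx : Vec n) (i : Fin l) :
    fkV g zbar dx (some i) = emb (gradYg g i zbar) (-(dgX g i zbar dx)) := rfl

@[simp] lemma emb_inl {m : ℕ} (w : Vec m) (r : ℝ) (j : Fin m) : emb w r (Sum.inl j) = w j := rfl
@[simp] lemma emb_inr {m : ℕ} (w : Vec m) (r : ℝ) (u : Unit) : emb w r (Sum.inr u) = r := rfl


/-- Proposition 3.2.3, part 2: if `λ ∈ M(z̄)` maximizes `Σ_i λ'_i ⟨∇_x g_i(z̄), dx⟩`
over `M(z̄)`, then `K(z̄, λ; dx)` is exactly the optimal solution set of the linear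
program: minimize `⟨dy, F(z̄)⟩` subject to
`⟨∇_x g_i(z̄), dx⟩ + ⟨∇_y g_i(z̄), dy⟩ ≤ 0` for all active `i`.
In particular `K(z̄, λ; dx)` does not depend on the choice of such an optimal `λ`. -/
theorem stmt_5 {n m l : ℕ}
    (F : Vec n × Vec m → Vec m) (g : Vec n × Vec m → Vec l)
    (Z : Set (Vec n × Vec m))
    (hF : ContDiff ℝ 1 F) (hg : ContDiff ℝ 1 g)
    (zbar : Vec n × Vec m) (hzbar : zbar ∈ feasSet F g Z)
    (hMne : (multSet F g zbar).Nonempty)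
    (dx : Vec n) (lam : Vec l) (hlam : lam ∈ multSet F g zbar)
    (hopt : ∀ lam' ∈ multSet F g zbar,
      ∑ i, lam' i * dgX g i zbar dx ≤ ∑ i, lam i * dgX g i zbar dx) :
    dirCrit g zbar lam dx =
      {dy : Vec m |
        (∀ i, g zbar i = 0 → dgX g i zbar dx + dgY g i zbar dy ≤ 0) ∧
        ∀ dy' : Vec m, (∀ i, g zbar i = 0 → dgX g i zbar dx + dgY g i zbar dy' ≤ 0) →
          dotp dy (F zbar) ≤ dotp dy' (F zbar)} := by
    classical
  obtain ⟨hzZ, hyS⟩ := hzbar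
  obtain ⟨hyC, hyVI⟩ := hyS
  obtain ⟨hlnn, hlF, hlg⟩ := hlam
  have hgle : ∀ i, g zbar i ≤ 0 := fun i => by simpa using hyC i
  -- complementarity of `lam`
  have hcomp : ∀ i, lam i * g zbar i = 0 := by
    intro i
    have := (Finset.sum_eq_zero_iff_of_nonpos
      (fun j _ => mul_nonpos_iff.mpr (Or.inl ⟨hlnn j, hgle j⟩))).mp ?_ i (Finset.mem_univ i)
    · exact this
    · exact hlg
  have hlz : ∀ i, g zbar i ≠ 0 → lam i = 0 := by
    intro i hgi
    rcases mul_eq_zero.mp (hcomp i) with h | h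
    · exact h
    · exact absurd h hgi
  -- the key linear identity for the objective value
  have hI : ∀ d : Vec m, dotp d (F zbar) = -∑ i, lam i * dgY g i zbar d := by
    intro d
    have hF' : ∀ j, F zbar j = -∑ i, lam i * gradYg g i zbar j := fun j => by
      have := hlF j; linarith
    have e1 : dotp d (F zbar) = -∑ j, ∑ i, d j * (lam i * gradYg g i zbar j) := by
      rw [dotp, ← Finset.sum_neg_distrib]
      refine Finset.sum_congr rfl fun j _ => ?_
      rw [hF' j, mul_neg, Finset.mul_sum]
    rw [e1, Finset.sum_comm]
    congr 1
    refine Finset.sum_congr rfl fun i _ => ?_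
    rw [dgY_eq, Finset.mul_sum]
    exact Finset.sum_congr rfl fun j _ => by ring
  have hI' : ∀ d : Vec m, dotp d (F zbar) =
      (∑ i, lam i * dgX g i zbar dx) - ∑ i, lam i * (dgX g i zbar dx + dgY g i zbar d) := by
    intro d
    rw [hI d]
    rw [show (∑ i, lam i * (dgX g i zbar dx + dgY g i zbar d)) =
        (∑ i, lam i * dgX g i zbar dx) + ∑ i, lam i * dgY g i zbar d by
      rw [← Finset.sum_add_distrib]; exact Finset.sum_congr rfl fun i _ => by ring]
    ring
  -- term-wise nonpositivity for feasible points
  have hT : ∀ d : Vec m, (∀ i, g zbar i = 0 → dgX g i zbar dx + dgY g i zbar d ≤ 0) →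
      ∀ i, lam i * (dgX g i zbar dx + dgY g i zbar d) ≤ 0 := by
    intro d hd i
    by_cases hact : g zbar i = 0
    · exact mul_nonpos_iff.mpr (Or.inl ⟨hlnn i, hd i hact⟩)
    · rw [hlz i hact, zero_mul]
  ext dy
  simp only [dirCrit, liftedCone, Set.mem_setOf_eq]
  constructor
  · -- easy direction : members of the critical set are optimal
    intro hK
    have hfeas : ∀ i, g zbar i = 0 → dgX g i zbar dx + dgY g i zbar dy ≤ 0 := by
      intro i hi
      rcases (hlnn i).eq_or_lt with h0 | hpos
      · exact (hK i hi).1 h0.symm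
      · exact le_of_eq ((hK i hi).2 hpos)
    refine ⟨hfeas, fun dy' hdy' => ?_⟩
    have hzero : ∀ i, lam i * (dgX g i zbar dx + dgY g i zbar dy) = 0 := by
      intro i
      by_cases hact : g zbar i = 0
      · rcases (hlnn i).eq_or_lt with h0 | hpos
        · rw [← h0, zero_mul]
        · rw [(hK i hact).2 hpos, mul_zero]
      · rw [hlz i hact, zero_mul]
    have hvdy : dotp dy (F zbar) = ∑ i, lam i * dgX g i zbar dx := by
      rw [hI' dy, Finset.sum_eq_zero fun i _ => hzero i, sub_zero]
    have hsum' : ∑ i, lam i * (dgX g i zbar dx + dgY g i zbar dy') ≤ 0 :=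
      Finset.sum_nonpos fun i _ => hT dy' hdy' i
    rw [hvdy, hI' dy']
    linarith
  · -- hard direction : optimal points lie in the critical set
    rintro ⟨h1, h2⟩
    set A : Finset (Fin l) := Finset.univ.filter (fun i => g zbar i = 0) with hA
    have hnotmem : (none : Option (Fin l)) ∉ A.image some := by simp
    set s : Finset (Option (Fin l)) := insert none (A.image some) with hs
    -- Farkas step
    have hfar : emb (fun j => -(F zbar j)) (-(dotp dy (F zbar))) ∈ coneOf s (fkV g zbar dx) := by
      apply farkas
      intro D hD
      have hDe : D = emb (fun j => D (Sum.inl j)) (D (Sum.inr ())) := by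
        refine PiLp.ext fun k => ?_
        cases k with
        | inl j => rfl
        | inr u => cases u; rfl
      set d : Vec m := fun j => D (Sum.inl j) with hd
      set t : ℝ := D (Sum.inr ()) with htdef
      have htle : t ≤ 0 := by
        have h3 := hD none (Finset.mem_insert_self _ _)
        rw [hDe, fkV_none, inner_emb, dotp_zero_left] at h3
        linarith
      have hcon : ∀ i, g zbar i = 0 → dotp (gradYg g i zbar) d ≤ dgX g i zbar dx * t := by
        intro i hi
        have hmem : (some i) ∈ s := by
          rw [hs]
          exact Finset.mem_insert_of_mem (Finset.mem_image_of_mem some (by simp [hA, hi]))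
        have h3 := hD (some i) hmem
        rw [hDe, fkV_some, inner_emb] at h3
        nlinarith [h3]
      rw [hDe, inner_emb]
      have hnegF : dotp (fun j => -(F zbar j)) d = -(dotp d (F zbar)) := by
        rw [dotp_comm]; simp [dotp]
      rw [hnegF]
      rcases lt_or_eq_of_le htle with htlt | ht0
      · -- t < 0 : rescale to a feasible point
        have hmt : 0 < -t := by linarith
        have hfeas : ∀ i, g zbar i = 0 →
            dgX g i zbar dx + dgY g i zbar ((-t)⁻¹ • d) ≤ 0 := by
          intro i hi
          have h3 := hcon i hi
          rw [dgY_smul, dgY_dotp]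
          have h4 : (-t)⁻¹ * dotp (gradYg g i zbar) d ≤ (-t)⁻¹ * (dgX g i zbar dx * t) :=
            mul_le_mul_of_nonneg_left h3 (le_of_lt (inv_pos.mpr hmt))
          have he : (-t)⁻¹ * (dgX g i zbar dx * t) = -(dgX g i zbar dx) := by
            rw [inv_neg, neg_mul, mul_comm (dgX g i zbar dx) t, ← mul_assoc,
              inv_mul_cancel₀ (ne_of_lt htlt), one_mul]
          linarith
        have h5 := h2 _ hfeas
        rw [dotp_smul_left] at h5
        have h6 := mul_le_mul_of_nonneg_left h5 (le_of_lt hmt)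
        rw [← mul_assoc, mul_inv_cancel₀ (ne_of_gt hmt), one_mul] at h6
        nlinarith
      · -- t = 0 : recession direction
        have hfeas : ∀ i, g zbar i = 0 → dgX g i zbar dx + dgY g i zbar (dy + d) ≤ 0 := by
          intro i hi
          have h3 := hcon i hi
          rw [ht0, mul_zero] at h3
          have h4 : dgY g i zbar d ≤ 0 := by rw [dgY_dotp]; exact h3
          rw [dgY_add]
          have := h1 i hi
          linarith
        have h5 := h2 (dy + d) hfeas
        rw [dotp_add_left] at h5
        rw [ht0]
        linarith
    obtain ⟨μ, hμnn, hμsum⟩ := hfar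
    have hnone_s : (none : Option (Fin l)) ∈ s := Finset.mem_insert_self _ _
    have hμ0 : 0 ≤ μ none := hμnn none hnone_s
    have hinj : ∀ a ∈ A, ∀ b ∈ A, some a = some b → a = b := fun a _ b _ h =>
      Option.some_injective _ h
    -- component extraction
    have hcomp_inl : ∀ j, -(F zbar j) = ∑ i ∈ A, μ (some i) * gradYg g i zbar j := by
      intro j
      have h6 := congrArg (fun x : ESp m => x (Sum.inl j)) hμsum
      rw [esp_sum_apply] at h6
      rw [hs, Finset.sum_insert hnotmem, Finset.sum_image hinj] at h6
      simp only [PiLp.smul_apply, fkV_none, fkV_some, emb_inl, smul_eq_mul] at h6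
      simpa using h6
    have hcomp_inr : ∑ i ∈ A, μ (some i) * dgX g i zbar dx
        = dotp dy (F zbar) + μ none := by
      have h6 := congrArg (fun x : ESp m => x (Sum.inr ())) hμsum
      rw [esp_sum_apply] at h6
      rw [hs, Finset.sum_insert hnotmem, Finset.sum_image hinj] at h6
      simp only [PiLp.smul_apply, fkV_none, fkV_some, emb_inr, smul_eq_mul, mul_one,
        mul_neg] at h6
      rw [Finset.sum_neg_distrib] at h6
      linarith
    -- build the multiplier ν and conclude via optimality of lam
    set ν : Vec l := fun i => if g zbar i = 0 then μ (some i) else 0 with hν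
    have hνfilter : ∀ f : Fin l → ℝ, ∑ i, ν i * f i = ∑ i ∈ A, μ (some i) * f i := by
      intro f
      rw [hA, Finset.sum_filter]
      refine Finset.sum_congr rfl fun i _ => ?_
      by_cases hact : g zbar i = 0 <;> simp [hν, hact]
    have hνmult : ν ∈ multSet F g zbar := by
      refine ⟨?_, ?_, ?_⟩
      · intro i
        by_cases hact : g zbar i = 0
        · have hmem : (some i) ∈ s := by
            rw [hs]
            exact Finset.mem_insert_of_mem (Finset.mem_image_of_mem some (by simp [hA, hact]))
          simpa [hν, hact] using hμnn (some i) hmem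
        · simp [hν, hact]
      · intro j
        rw [hνfilter (fun i => gradYg g i zbar j), ← hcomp_inl j]
        ring
      · refine Finset.sum_eq_zero fun i _ => ?_
        by_cases hact : g zbar i = 0 <;> simp [hν, hact]
    have hple : dotp dy (F zbar) ≤ ∑ i, lam i * dgX g i zbar dx := by
      have h8 := hopt ν hνmult
      rw [hνfilter (fun i => dgX g i zbar dx), hcomp_inr] at h8
      linarith
    -- complementarity for dy
    have hSnn : 0 ≤ ∑ i, lam i * (dgX g i zbar dx + dgY g i zbar dy) := by
      have := hI' dy
      linarith
    have hzero := (Finset.sum_eq_zero_iff_of_nonpos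
      (fun i _ => hT dy h1 i)).mp
      (le_antisymm (Finset.sum_nonpos fun i _ => hT dy h1 i) hSnn)
    intro i hi
    refine ⟨fun _ => h1 i hi, fun hpos => ?_⟩
    rcases mul_eq_zero.mp (hzero i (Finset.mem_univ i)) with h | h
    · exact absurd h (ne_of_gt hpos)
    · exact h
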